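/- Let 0 < γ < 1 and let x̃ be a real root of x^3 + (2γ-1)x^2 + (γ(γ-1)-1)x + (1-2γ) = 0 with x̃ ∉ {1-γ, -γ}. Set φ = (1-γ)/(x̃+γ)^2 + γ/(x̃-(1-γ))^2. Then (1+φ)(1-φ) < 0. -/
import Mathlib


theorem stmt_16 (γ xt : ℝ) (h0 : 0 < γ) (h1 : γ < 1)
    (hroot : xt ^ 3 + (2 * γ - 1) * xt ^ 2 + (γ * (γ - 1) - 1) * xt + (1 - 2 * γ) = 0)
    (hne1 : xt ≠ 1 - γ) (hne2 : xt ≠ -γ) :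
    (1 + ((1 - γ) / (xt + γ) ^ 2 + γ / (xt - (1 - γ)) ^ 2)) *
      (1 - ((1 - γ) / (xt + γ) ^ 2 + γ / (xt - (1 - γ)) ^ 2)) < 0 := by
  have ha : xt + γ ≠ 0 := by
    intro h; apply hne2; linarith
  have hb : xt - (1 - γ) ≠ 0 := by
    intro h; apply hne1; linarith
  have ha2 : 0 < (xt + γ) ^ 2 := (sq_nonneg _).lt_of_ne (Ne.symm (pow_ne_zero 2 ha))
  have hb2 : 0 < (xt - (1 - γ)) ^ 2 := (sq_nonneg _).lt_of_ne (Ne.symm (pow_ne_zero 2 hb))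
  set φ : ℝ := (1 - γ) / (xt + γ) ^ 2 + γ / (xt - (1 - γ)) ^ 2 with hφ
  have key : 1 < φ := by
    rw [← sub_pos]
    have h2 : φ - 1 =
        (γ * (1 - γ) * ((xt + (2 * γ - 1) / 2) ^ 2 + 3 / 4) +
          (1 - 2 * γ - xt) *
            (xt ^ 3 + (2 * γ - 1) * xt ^ 2 + (γ * (γ - 1) - 1) * xt + (1 - 2 * γ))) /
          ((xt + γ) ^ 2 * (xt - (1 - γ)) ^ 2) := by
      rw [hφ]; field_simp; ring
    rw [h2, hroot]
    apply div_pos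
    · have hγ : 0 < γ * (1 - γ) := mul_pos h0 (by linarith)
      nlinarith [sq_nonneg (xt + (2 * γ - 1) / 2)]
    · exact mul_pos ha2 hb2
  have h1φ : 0 < 1 + φ := by linarith
  have h2φ : 1 - φ < 0 := by linarith
  exact mul_neg_of_pos_of_neg h1φ h2φ
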